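/- For any real function ρ on R^3 with ρ ∈ L^{6/5}(R^3), the Coulomb energy satisfies D(ρ) ≤ C ‖ρ‖_{L^{6/5}}² for a universal constant C, where D(ρ) = (1/2)∫∫ ρ(x)ρ(y)/|x−y| dx dy. -/

import Mathlib

open MeasureTheory
open Metric Set ENNReal

noncomputable section

abbrev E3 := EuclideanSpace ℝ (Fin 3)

def coulD (ρ : E3 → ℝ) : ℝ :=
  (1 / 2) * ∫ x, ∫ y, ρ x * ρ y / ‖x - y‖

namespace HLS3
def ker (x y : E3) : ℝ≥0∞ := (ENNReal.ofReal ‖x - y‖)⁻¹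
def V : ℝ≥0∞ := volume (ball (0 : E3) 1)
def K : ℝ≥0∞ := 1 + 4 * V
lemma finrank_E3 : Module.finrank ℝ E3 = 3 := by simp [finrank_euclideanSpace]
lemma volume_ball_E3 (x : E3) (r : ℝ) (hr : 0 ≤ r) :
    volume (ball x r) = ENNReal.ofReal (r ^ 3) * V := by
  rw [Measure.addHaar_ball volume x hr, finrank_E3]; rfl

lemma ker_le_of_dist {x y : E3} {r : ℝ} (h : r ≤ dist y x) :
    ker x y ≤ (ENNReal.ofReal r)⁻¹ := by
  apply ENNReal.inv_le_inv.2
  apply ENNReal.ofReal_le_ofReal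
  rw [show ‖x - y‖ = dist y x from by rw [dist_comm, dist_eq_norm]]
  exact h

lemma lintegral_ker_ball (x : E3) {r : ℝ} (hr : 0 < r) :
    ∫⁻ y in ball x r, ker x y ∂volume ≤ 4 * V * ENNReal.ofReal (r ^ 2) := by
  set Sh : ℕ → Set E3 := fun i => ball x (r * (2:ℝ)⁻¹ ^ i) \ ball x (r * (2:ℝ)⁻¹ ^ (i + 1))
    with hSh
  have hsub : ball x r ⊆ {x} ∪ ⋃ i, Sh i := by
    intro y hy
    rcases eq_or_ne y x with h | h
    · exact Or.inl (by simp [h])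
    right
    have hd : 0 < dist y x := dist_pos.2 h
    have hdr : dist y x < r := mem_ball.1 hy
    have hq : 0 < dist y x / r := div_pos hd hr
    obtain ⟨n, hn1, hn2⟩ := exists_mem_Ico_zpow (x := dist y x / r) (y := (2:ℝ)) hq one_lt_two
    have hq1 : dist y x / r < 1 := (div_lt_one hr).2 hdr
    have hn_neg : n < 0 := by
      by_contra hge
      push_neg at hge
      have : (1:ℝ) ≤ (2:ℝ) ^ n := one_le_zpow₀ one_le_two hge
      linarith [hn1, hq1]
    set i : ℕ := (-(n + 1)).toNat with hi
    have hin : (i : ℤ) = -(n+1) := Int.toNat_of_nonneg (by omega)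
    have h2i : ((2:ℝ)⁻¹) ^ i = (2:ℝ) ^ (n + 1) := by
      rw [inv_pow, ← zpow_natCast, hin, zpow_neg, inv_inv]
    have h2i1 : ((2:ℝ)⁻¹) ^ (i + 1) = (2:ℝ) ^ n := by
      have hin' : ((i:ℤ) + 1) = -n := by omega
      rw [inv_pow, ← zpow_natCast, Nat.cast_add, Nat.cast_one, hin', zpow_neg, inv_inv]
    refine mem_iUnion.2 ⟨i, ?_, ?_⟩
    · rw [mem_ball, h2i]
      calc dist y x = (dist y x / r) * r := by field_simp
        _ < (2:ℝ)^(n+1) * r := by apply mul_lt_mul_of_pos_right hn2 hr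
        _ = r * (2:ℝ)^(n+1) := by ring
    · rw [mem_ball, h2i1]
      push_neg
      calc r * (2:ℝ)^n = (2:ℝ)^n * r := by ring
        _ ≤ (dist y x / r) * r := mul_le_mul_of_nonneg_right hn1 hr.le
        _ = dist y x := by field_simp
  have hterm : ∀ i : ℕ, (ENNReal.ofReal (r * (2:ℝ)⁻¹ ^ (i+1)))⁻¹ *
      (ENNReal.ofReal ((r * (2:ℝ)⁻¹ ^ i) ^ 3) * V)
      ≤ 2 * V * ENNReal.ofReal (r ^ 2) * ((2:ℝ≥0∞)⁻¹) ^ i := by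
    intro i
    set t := ENNReal.ofReal r with ht
    have htne : t ≠ 0 := by simp [ht, ENNReal.ofReal_eq_zero]; linarith
    have httop : t ≠ ∞ := ENNReal.ofReal_ne_top
    have hc : ENNReal.ofReal ((2:ℝ)⁻¹) = (2:ℝ≥0∞)⁻¹ := by
      rw [ENNReal.ofReal_inv_of_pos (by norm_num)]; norm_num
    have h1 : ENNReal.ofReal (r * (2:ℝ)⁻¹ ^ (i+1)) = t * ((2:ℝ≥0∞)⁻¹) ^ (i+1) := by
      rw [ENNReal.ofReal_mul hr.le, ENNReal.ofReal_pow (by norm_num), hc]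
    have h2 : ENNReal.ofReal ((r * (2:ℝ)⁻¹ ^ i) ^ 3) = t ^ 3 * (((2:ℝ≥0∞)⁻¹) ^ i) ^ 3 := by
      rw [mul_pow, ENNReal.ofReal_mul (by positivity), ENNReal.ofReal_pow hr.le,
        ENNReal.ofReal_pow (by positivity), ENNReal.ofReal_pow (by norm_num), hc]
    rw [h1, h2]
    have hcpowne : ∀ m : ℕ, ((2:ℝ≥0∞)⁻¹) ^ m ≠ 0 := fun m => by
      apply pow_ne_zero; simp
    have hcpowtop : ∀ m : ℕ, ((2:ℝ≥0∞)⁻¹) ^ m ≠ ∞ := fun m => by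
      apply pow_ne_top; simp
    rw [ENNReal.mul_inv (Or.inl htne) (Or.inl ENNReal.ofReal_ne_top), ENNReal.inv_pow, inv_inv]
    have h4 : ENNReal.ofReal (r^2) = t ^ 2 := ENNReal.ofReal_pow hr.le 2
    rw [h4]
    have hcan : (2:ℝ≥0∞)^i * ((2:ℝ≥0∞)⁻¹)^i = 1 := by
      rw [← mul_pow, ENNReal.mul_inv_cancel (by norm_num) (by norm_num), one_pow]
    have hle1 : ((2:ℝ≥0∞)⁻¹)^i ≤ 1 := pow_le_one' (ENNReal.inv_le_one.2 one_le_two) i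
    have ht3 : t⁻¹ * t^3 = t^2 := by
      rw [pow_succ' (M := ℝ≥0∞) t 2, ← mul_assoc, ENNReal.inv_mul_cancel htne httop, one_mul]
    calc t⁻¹ * (2:ℝ≥0∞)^(i+1) * (t^3 * (((2:ℝ≥0∞)⁻¹)^i)^3 * V)
        = (t⁻¹ * t^3) * V * ((2:ℝ≥0∞)^(i+1) * (((2:ℝ≥0∞)⁻¹)^i)^3) := by ring
      _ = t^2 * V * (2 * ((2:ℝ≥0∞)^i * ((2:ℝ≥0∞)⁻¹)^i) * ((2:ℝ≥0∞)⁻¹)^i * ((2:ℝ≥0∞)⁻¹)^i) := by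
          rw [ht3]; ring
      _ ≤ t^2 * V * (2 * 1 * ((2:ℝ≥0∞)⁻¹)^i * 1) := by
          rw [hcan]; gcongr
      _ = 2 * V * t^2 * ((2:ℝ≥0∞)⁻¹)^i := by ring
  calc ∫⁻ y in ball x r, ker x y ∂volume
      ≤ ∫⁻ y in {x} ∪ ⋃ i, Sh i, ker x y ∂volume := lintegral_mono_set hsub
    _ ≤ (∫⁻ y in {x}, ker x y ∂volume) + ∫⁻ y in ⋃ i, Sh i, ker x y ∂volume :=
        lintegral_union_le _ _ _
    _ ≤ 0 + ∑' i, ∫⁻ y in Sh i, ker x y ∂volume := by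
        gcongr
        · rw [Measure.restrict_eq_zero.2 (measure_singleton x)]; simp
        · exact lintegral_iUnion_le _ _
    _ ≤ ∑' i, (ENNReal.ofReal (r * (2:ℝ)⁻¹ ^ (i+1)))⁻¹ *
          (ENNReal.ofReal ((r * (2:ℝ)⁻¹ ^ i) ^ 3) * V) := by
        rw [zero_add]
        apply ENNReal.tsum_le_tsum
        intro i
        calc ∫⁻ y in Sh i, ker x y ∂volume
            ≤ ∫⁻ _ in Sh i, (ENNReal.ofReal (r * (2:ℝ)⁻¹ ^ (i+1)))⁻¹ ∂volume := by
              apply setLIntegral_mono measurable_const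
              intro y hy
              apply ker_le_of_dist
              have h2 := hy.2
              rw [mem_ball] at h2
              push_neg at h2
              exact h2
          _ = (ENNReal.ofReal (r * (2:ℝ)⁻¹ ^ (i+1)))⁻¹ * volume (Sh i) := by
              rw [setLIntegral_const]
          _ ≤ _ := by
              gcongr
              calc volume (Sh i) ≤ volume (ball x (r * (2:ℝ)⁻¹ ^ i)) :=
                    measure_mono diff_subset
                _ = ENNReal.ofReal ((r * (2:ℝ)⁻¹ ^ i) ^ 3) * V :=
                    volume_ball_E3 x _ (by positivity)
    _ ≤ ∑' i : ℕ, 2 * V * ENNReal.ofReal (r ^ 2) * ((2:ℝ≥0∞)⁻¹) ^ i :=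
        ENNReal.tsum_le_tsum hterm
    _ = 2 * V * ENNReal.ofReal (r ^ 2) * ∑' i : ℕ, ((2:ℝ≥0∞)⁻¹) ^ i := ENNReal.tsum_mul_left
    _ ≤ 4 * V * ENNReal.ofReal (r ^ 2) := by
        have : ∑' i : ℕ, ((2:ℝ≥0∞)⁻¹) ^ i = 2 := by
          rw [ENNReal.tsum_geometric]
          rw [show (1:ℝ≥0∞) - 2⁻¹ = 2⁻¹ by
            rw [ENNReal.sub_eq_of_eq_add (by norm_num)]
            rw [← two_mul, ENNReal.mul_inv_cancel (by norm_num) (by norm_num)]]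
          rw [inv_inv]
        rw [this]
        calc 2 * V * ENNReal.ofReal (r ^ 2) * 2 = 4 * V * ENNReal.ofReal (r^2) := by ring
          _ ≤ _ := le_refl _


end HLS3
end

noncomputable section L2
namespace HLS3
open scoped ENNReal

lemma measurable_ker : Measurable (Function.uncurry ker) := by
  apply Measurable.inv
  apply ENNReal.measurable_ofReal.comp
  exact (continuous_fst.sub continuous_snd).norm.measurable

lemma V_ne_top : V ≠ ∞ := measure_ball_lt_top.ne
lemma K_ne_zero : K ≠ 0 := by simp [K]
lemma K_ne_top : K ≠ ∞ := by
  simp [K, ENNReal.add_ne_top, ENNReal.mul_ne_top, V_ne_top]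

/-- key single-integral estimate -/
lemma setLIntegral_ker_le (x : E3) (B : Set E3) :
    ∫⁻ y in B, ker x y ∂volume ≤ K * (volume B) ^ ((2:ℝ)/3) := by
  set b := volume B with hb
  rcases eq_or_ne b 0 with h0 | h0
  · rw [Measure.restrict_eq_zero.2 (show volume B = 0 by rw [← hb, h0])]
    simp
  rcases eq_or_ne b ∞ with htop | htop
  · rw [htop]
    rw [ENNReal.top_rpow_of_pos (by norm_num)]
    rw [ENNReal.mul_top K_ne_zero]
    exact le_top
  have hbpos : 0 < b.toReal := ENNReal.toReal_pos h0 htop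
  set r0 : ℝ := (b.toReal) ^ ((1:ℝ)/3) with hr0
  have hr0pos : 0 < r0 := Real.rpow_pos_of_pos hbpos _
  have hofr0 : ENNReal.ofReal r0 = b ^ ((1:ℝ)/3) := by
    rw [hr0, ← ENNReal.ofReal_rpow_of_pos hbpos, ENNReal.ofReal_toReal htop]
  have hofr0sq : ENNReal.ofReal (r0 ^ 2) = b ^ ((2:ℝ)/3) := by
    rw [ENNReal.ofReal_pow hr0pos.le, hofr0, ← ENNReal.rpow_natCast (b ^ ((1:ℝ)/3)) 2,
      ← ENNReal.rpow_mul]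
    norm_num
  calc ∫⁻ y in B, ker x y ∂volume
      ≤ ∫⁻ y in (B \ ball x r0) ∪ (B ∩ ball x r0), ker x y ∂volume := by
        apply lintegral_mono_set
        intro y hy
        by_cases hyb : y ∈ ball x r0
        · exact Or.inr ⟨hy, hyb⟩
        · exact Or.inl ⟨hy, hyb⟩
    _ ≤ (∫⁻ y in B \ ball x r0, ker x y ∂volume) + ∫⁻ y in B ∩ ball x r0, ker x y ∂volume :=
        lintegral_union_le _ _ _
    _ ≤ (ENNReal.ofReal r0)⁻¹ * b + 4 * V * ENNReal.ofReal (r0 ^ 2) := by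
        gcongr
        · calc (∫⁻ y in B \ ball x r0, ker x y ∂volume)
              ≤ ∫⁻ _ in B \ ball x r0, (ENNReal.ofReal r0)⁻¹ ∂volume := by
                apply setLIntegral_mono measurable_const
                intro y hy
                apply ker_le_of_dist
                have h2 := hy.2
                rw [mem_ball] at h2
                push_neg at h2
                exact h2
            _ = (ENNReal.ofReal r0)⁻¹ * volume (B \ ball x r0) := setLIntegral_const _ _
            _ ≤ (ENNReal.ofReal r0)⁻¹ * b := by gcongr; exact measure_mono diff_subset
        · calc (∫⁻ y in B ∩ ball x r0, ker x y ∂volume)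
              ≤ ∫⁻ y in ball x r0, ker x y ∂volume :=
                lintegral_mono_set inter_subset_right
            _ ≤ 4 * V * ENNReal.ofReal (r0 ^ 2) := lintegral_ker_ball x hr0pos
    _ = b ^ ((2:ℝ)/3) + 4 * V * b ^ ((2:ℝ)/3) := by
        rw [hofr0, hofr0sq, ← ENNReal.rpow_neg_one, ← ENNReal.rpow_mul]
        have hx : b ^ ((1:ℝ)/3 * -1) * b = b ^ ((2:ℝ)/3) := by
          nth_rewrite 2 [← ENNReal.rpow_one b]
          rw [← ENNReal.rpow_add _ _ h0 htop]
          norm_num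
        rw [hx]
    _ = K * b ^ ((2:ℝ)/3) := by rw [K]; ring
end HLS3
end L2

noncomputable section TB
namespace HLS3

lemma Tbound1 (A B : Set E3) :
    ∫⁻ x in A, ∫⁻ y in B, ker x y ∂volume ∂volume ≤ K * volume A * (volume B) ^ ((2:ℝ)/3) := by
  calc ∫⁻ x in A, ∫⁻ y in B, ker x y ∂volume ∂volume
      ≤ ∫⁻ _ in A, K * (volume B) ^ ((2:ℝ)/3) ∂volume := by
        apply setLIntegral_mono measurable_const
        intro x _
        exact setLIntegral_ker_le x B
    _ = K * (volume B) ^ ((2:ℝ)/3) * volume A := setLIntegral_const _ _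
    _ = K * volume A * (volume B) ^ ((2:ℝ)/3) := by ring

lemma ker_symm (x y : E3) : ker x y = ker y x := by
  simp [ker, norm_sub_rev]

lemma Tswap (A B : Set E3) :
    ∫⁻ x in A, ∫⁻ y in B, ker x y ∂volume ∂volume
      = ∫⁻ y in B, ∫⁻ x in A, ker y x ∂volume ∂volume := by
  rw [lintegral_lintegral_swap (measurable_ker.aemeasurable)]
  congr 1
  ext y
  congr 1
  ext x
  rw [ker_symm]

lemma Tbound2 (A B : Set E3) :
    ∫⁻ x in A, ∫⁻ y in B, ker x y ∂volume ∂volume ≤ K * volume B * (volume A) ^ ((2:ℝ)/3) := by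
  rw [Tswap]
  exact Tbound1 B A

end HLS3
end TB

noncomputable section PQ
open scoped NNReal
namespace HLS3

def P (j : ℤ) : ℝ≥0∞ := (2:ℝ≥0∞) ^ ((j:ℝ))

lemma two_rpow_ne_zero (s : ℝ) : (2:ℝ≥0∞) ^ s ≠ 0 :=
  (ENNReal.rpow_pos (by norm_num) (by norm_num)).ne'

lemma two_rpow_ne_top (s : ℝ) : (2:ℝ≥0∞) ^ s ≠ ∞ := by
  intro h
  have := ENNReal.rpow_eq_top_iff.mp h
  simp at this

lemma two_rpow_add (s t : ℝ) : (2:ℝ≥0∞) ^ s * 2 ^ t = 2 ^ (s + t) :=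
  (ENNReal.rpow_add _ _ (by norm_num) (by norm_num)).symm

lemma P_ne_zero (j : ℤ) : P j ≠ 0 := two_rpow_ne_zero _
lemma P_ne_top (j : ℤ) : P j ≠ ∞ := two_rpow_ne_top _

lemma P_zpow (j : ℤ) : P j = (2:ℝ≥0∞) ^ j := ENNReal.rpow_intCast 2 j

lemma two_mul_P (j : ℤ) : 2 * P j = P (j + 1) := by
  rw [P, P]
  nth_rewrite 1 [show (2:ℝ≥0∞) = 2 ^ (1:ℝ) by rw [ENNReal.rpow_one]]
  rw [two_rpow_add]
  norm_num
  rw [add_comm]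

lemma P_mono {j k : ℤ} (h : j ≤ k) : P j ≤ P k :=
  ENNReal.rpow_le_rpow_of_exponent_le one_le_two (by exact_mod_cast h)

def q : ℝ≥0∞ := (2:ℝ≥0∞) ^ (-(1/5 : ℝ))

lemma q_lt_one : q < 1 := by
  apply ENNReal.rpow_lt_one_of_one_lt_of_neg one_lt_two
  norm_num

lemma q_pow (n : ℕ) : q ^ n = (2:ℝ≥0∞) ^ (-(n/5 : ℝ)) := by
  rw [q, ← ENNReal.rpow_natCast ((2:ℝ≥0∞) ^ (-(1/5:ℝ))) n, ← ENNReal.rpow_mul]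
  congr 1
  ring

lemma one_sub_q_ne_zero : (1:ℝ≥0∞) - q ≠ 0 := by
  simp only [ne_eq, tsub_eq_zero_iff_le, not_le]
  exact q_lt_one

def c6 : ℝ≥0∞ := ∑' m : ℤ, q ^ m.natAbs

lemma c6_le : c6 ≤ 2 * (1 - q)⁻¹ := by
  rw [c6, tsum_of_nat_of_neg_add_one ENNReal.summable ENNReal.summable]
  have h1 : ∑' n : ℕ, q ^ (n:ℤ).natAbs = (1 - q)⁻¹ := by
    simp only [Int.natAbs_natCast]
    exact ENNReal.tsum_geometric q
  have h2 : ∑' n : ℕ, q ^ (-((n:ℤ) + 1)).natAbs ≤ (1 - q)⁻¹ := by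
    rw [← ENNReal.tsum_geometric q]
    apply ENNReal.tsum_le_tsum
    intro n
    have : (-((n:ℤ) + 1)).natAbs = n + 1 := by omega
    rw [this]
    exact pow_le_pow_of_le_one zero_le q_lt_one.le (by omega)
  rw [h1]
  calc (1-q)⁻¹ + ∑' n : ℕ, q ^ (-((n:ℤ) + 1)).natAbs ≤ (1-q)⁻¹ + (1-q)⁻¹ := by gcongr
    _ = 2 * (1-q)⁻¹ := (two_mul _).symm

lemma c6_ne_top : c6 ≠ ∞ := by
  refine ne_top_of_le_ne_top ?_ c6_le
  apply ENNReal.mul_ne_top (by norm_num)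
  simp [ENNReal.inv_ne_top, one_sub_q_ne_zero]

lemma tsum_q_shift (j : ℤ) : ∑' k : ℤ, q ^ (j - k).natAbs = c6 := by
  rw [c6]
  exact (Equiv.subLeft j).tsum_eq (fun m => q ^ m.natAbs)

end HLS3
end PQ

noncomputable section MainL
namespace HLS3
open scoped NNReal

def C0 : ℝ≥0∞ := 16 * K * (1 - q)⁻¹

lemma C0_ne_zero : C0 ≠ 0 := by
  simp only [C0]
  refine mul_ne_zero (mul_ne_zero (by norm_num) K_ne_zero) ?_
  simp only [ne_eq, ENNReal.inv_eq_zero]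
  exact fun h => (h ▸ (tsub_le_self (a := (1:ℝ≥0∞)) (b := q)) : (⊤:ℝ≥0∞) ≤ 1).not_gt
    (by norm_num)

lemma C0_ne_top : C0 ≠ ∞ := by
  refine ENNReal.mul_ne_top (ENNReal.mul_ne_top (by norm_num) K_ne_top) ?_
  simp [ENNReal.inv_ne_top, one_sub_q_ne_zero]

lemma core_alg {j k : ℤ} (hkj : k ≤ j) (aj ak : ℝ≥0∞) :
    P j * P k * (aj * ak ^ ((2:ℝ)/3))
      = q ^ ((j - k).natAbs) * ((P j ^ ((6:ℝ)/5) * aj) * ((P k ^ ((6:ℝ)/5) * ak) ^ ((2:ℝ)/3))) := by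
  have hnat : (((j - k).natAbs : ℝ)) = (j:ℝ) - (k:ℝ) := by
    have h2 : ((j - k : ℤ) : ℝ) = (j:ℝ) - k := by push_cast; ring
    rw [Nat.cast_natAbs, abs_of_nonneg (show (0:ℤ) ≤ j - k by omega), h2]
  rw [q_pow, hnat]
  rw [ENNReal.mul_rpow_of_nonneg _ _ (by norm_num : (0:ℝ) ≤ 2/3)]
  rw [P, P, ← ENNReal.rpow_mul, ← ENNReal.rpow_mul, ← ENNReal.rpow_mul]
  calc (2:ℝ≥0∞) ^ ((j:ℝ)) * 2 ^ ((k:ℝ)) * (aj * ak ^ ((2:ℝ)/3))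
      = 2 ^ ((j:ℝ) + (k:ℝ)) * (aj * ak ^ ((2:ℝ)/3)) := by rw [two_rpow_add]
    _ = 2 ^ (-(((j:ℝ) - (k:ℝ))/5)) * (2 ^ ((j:ℝ) * (6/5)) * 2 ^ ((k:ℝ) * (6/5) * (2/3)))
          * (aj * ak ^ ((2:ℝ)/3)) := by
        rw [two_rpow_add, two_rpow_add]
        congr 2
        ring
    _ = 2 ^ (-(((j:ℝ) - (k:ℝ))/5)) * (2 ^ ((j:ℝ) * (6/5)) * aj
          * (2 ^ ((k:ℝ) * (6/5) * (2/3)) * ak ^ ((2:ℝ)/3))) := by ring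
    _ = 2 ^ (-(((j:ℝ) - (k:ℝ))/5)) * (2 ^ ((j:ℝ) * (6/5)) * aj
          * (2 ^ ((k:ℝ) * (6/5 * (2/3))) * ak ^ ((2:ℝ)/3))) := by
        rw [show (k:ℝ) * (6/5) * (2/3) = (k:ℝ) * (6/5 * (2/3)) by ring]

theorem lintegral_HLS {f : E3 → ℝ≥0∞} (hf : Measurable f) (hfin : ∀ x, f x ≠ ∞) :
    ∫⁻ x, ∫⁻ y, f x * f y * ker x y ∂volume ∂volume
      ≤ C0 * (∫⁻ x, f x ^ ((6:ℝ)/5) ∂volume) ^ ((5:ℝ)/3) := by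
  set S := ∫⁻ x, f x ^ ((6:ℝ)/5) ∂volume with hS
  -- trivial cases
  rcases eq_or_ne S 0 with hS0 | hS0
  · have hf0 : f =ᵐ[volume] 0 := by
      have h1 : (fun x => f x ^ ((6:ℝ)/5)) =ᵐ[volume] 0 := by
        rw [← lintegral_eq_zero_iff (hf.pow_const _)]
        exact hS0
      filter_upwards [h1] with x hx
      simp only [Pi.zero_apply] at hx ⊢
      by_contra hne
      exact absurd hx (by
        apply (ENNReal.rpow_pos (pos_iff_ne_zero.2 hne) (hfin x)).ne')
    have : ∫⁻ x, ∫⁻ y, f x * f y * ker x y ∂volume ∂volume = 0 := by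
      rw [lintegral_eq_zero_iff']
      · filter_upwards [hf0] with x hx
        simp only [Pi.zero_apply] at hx
        simp [hx]
      · apply Measurable.aemeasurable
        apply Measurable.lintegral_prod_right
        apply Measurable.mul
        · exact (hf.comp measurable_fst).mul (hf.comp measurable_snd)
        · exact measurable_ker
    rw [this]
    exact zero_le
  rcases eq_or_ne S ∞ with hStop | hStop
  · rw [hStop, ENNReal.top_rpow_of_pos (by norm_num), ENNReal.mul_top C0_ne_zero]
    exact le_top
  -- dyadic pieces
  set A : ℤ → Set E3 := fun j => {x | P j < f x ∧ f x ≤ 2 * P j} with hA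
  have hAm : ∀ j, MeasurableSet (A j) := by
    intro j
    exact (hf measurableSet_Ioi).inter (hf measurableSet_Iic)
  have hAdisj : Pairwise (Function.onFun Disjoint A) := by
    have key : ∀ j k : ℤ, j < k → Disjoint (A j) (A k) := by
      intro j k hlt
      apply Set.disjoint_left.2
      rintro x ⟨_, hx2⟩ ⟨hx3, _⟩
      have h1 : f x ≤ P (j+1) := by rwa [two_mul_P] at hx2
      have h2 : P (j+1) ≤ P k := P_mono (by omega)
      exact absurd (lt_of_le_of_lt (h1.trans h2) hx3) (lt_irrefl _)
    intro j k hjk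
    rcases hjk.lt_or_gt with h | h
    · exact key j k h
    · exact (key k j h).symm
  set a : ℤ → ℝ≥0∞ := fun j => volume (A j) with ha
  set u : ℤ → ℝ≥0∞ := fun j => (P j) ^ ((6:ℝ)/5) * a j with hu
  have hu_le : ∀ j, u j ≤ S := by
    intro j
    calc u j = ∫⁻ _ in A j, (P j) ^ ((6:ℝ)/5) ∂volume := by rw [setLIntegral_const, hu]
      _ ≤ ∫⁻ x in A j, f x ^ ((6:ℝ)/5) ∂volume := by
          apply setLIntegral_mono (hf.pow_const _)
          intro x hx
          exact ENNReal.rpow_le_rpow hx.1.le (by norm_num)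
      _ ≤ S := setLIntegral_le_lintegral _ _
  have hu_sum : ∑' j, u j ≤ S := by
    calc ∑' j, u j ≤ ∑' j, ∫⁻ x in A j, f x ^ ((6:ℝ)/5) ∂volume := by
          apply ENNReal.tsum_le_tsum
          intro j
          calc u j = ∫⁻ _ in A j, (P j) ^ ((6:ℝ)/5) ∂volume := by rw [setLIntegral_const, hu]
            _ ≤ ∫⁻ x in A j, f x ^ ((6:ℝ)/5) ∂volume := by
                apply setLIntegral_mono (hf.pow_const _)
                intro x hx
                exact ENNReal.rpow_le_rpow hx.1.le (by norm_num)
      _ = ∫⁻ x in ⋃ j, A j, f x ^ ((6:ℝ)/5) ∂volume :=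
          (lintegral_iUnion hAm hAdisj _).symm
      _ ≤ S := setLIntegral_le_lintegral _ _
  -- the dyadic pieces of f
  set g : ℤ → E3 → ℝ≥0∞ := fun j x => (A j).indicator (fun _ => 2 * P j) x with hg
  have hgm : ∀ j, Measurable (g j) := fun j => measurable_const.indicator (hAm j)
  have hg_ne_top : ∀ j x, g j x ≠ ∞ := by
    intro j x
    by_cases hx : x ∈ A j
    · simp only [hg, indicator_of_mem hx]
      exact ENNReal.mul_ne_top (by norm_num) (P_ne_top j)
    · simp only [hg, indicator_of_notMem hx]
      exact ENNReal.zero_ne_top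
  have hcover : ∀ x, f x ≤ ∑' j : ℤ, g j x := by
    intro x
    rcases eq_or_ne (f x) 0 with h0 | h0
    · rw [h0]; exact zero_le
    obtain ⟨n, hn1, hn2⟩ := ENNReal.exists_mem_Ioc_zpow h0 (hfin x) one_lt_two (by norm_num)
    have hxA : x ∈ A n := by
      constructor
      · rw [P_zpow]; exact hn1
      · rw [two_mul_P, P_zpow]; exact hn2
    calc f x ≤ 2 * P n := by rw [two_mul_P, P_zpow]; exact hn2
      _ = g n x := by simp only [hg, indicator_of_mem hxA]
      _ ≤ ∑' j : ℤ, g j x := ENNReal.le_tsum n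
  set T : ℤ → ℤ → ℝ≥0∞ := fun j k => ∫⁻ x in A j, ∫⁻ y in A k, ker x y ∂volume ∂volume
    with hT
  -- expansion of the double integral
  have hdouble : ∀ (j k : ℤ), (∫⁻ x, ∫⁻ y, g j x * (g k y * ker x y) ∂volume ∂volume)
      = (2 * P j) * ((2 * P k) * T j k) := by
    intro j k
    have hyint : ∀ x, (∫⁻ y, g k y * ker x y ∂volume)
        = (2 * P k) * ∫⁻ y in A k, ker x y ∂volume := by
      intro x
      have hind : ∀ y, g k y * ker x y
          = (A k).indicator (fun y' => (2 * P k) * ker x y') y := by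
        intro y
        by_cases hy : y ∈ A k
        · simp only [hg, indicator_of_mem hy]
        · simp only [hg, indicator_of_notMem hy, zero_mul]
      simp_rw [hind]
      rw [lintegral_indicator (hAm k)]
      exact lintegral_const_mul' _ _ (ENNReal.mul_ne_top (by norm_num) (P_ne_top k))
    calc (∫⁻ x, ∫⁻ y, g j x * (g k y * ker x y) ∂volume ∂volume)
        = ∫⁻ x, g j x * ((2 * P k) * ∫⁻ y in A k, ker x y ∂volume) ∂volume := by
          congr 1
          ext x
          rw [lintegral_const_mul' _ _ (hg_ne_top j x), hyint]
      _ = (2 * P j) * ((2 * P k) * T j k) := by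
          have hind : ∀ x, g j x * ((2 * P k) * ∫⁻ y in A k, ker x y ∂volume)
              = (A j).indicator
                  (fun x' => (2 * P j) * ((2 * P k) * ∫⁻ y in A k, ker x' y ∂volume)) x := by
            intro x
            by_cases hx : x ∈ A j
            · simp only [hg, indicator_of_mem hx]
            · simp only [hg, indicator_of_notMem hx, zero_mul]
          simp_rw [hind]
          rw [lintegral_indicator (hAm j)]
          rw [lintegral_const_mul' _ _ (ENNReal.mul_ne_top (by norm_num) (P_ne_top j))]
          congr 1
          rw [hT]
          exact lintegral_const_mul' _ _ (ENNReal.mul_ne_top (by norm_num) (P_ne_top k))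
  -- step 1 : expand into the dyadic double sum
  have step1 : (∫⁻ x, ∫⁻ y, f x * f y * ker x y ∂volume ∂volume)
      ≤ ∑' p : ℤ × ℤ, (2 * P p.1) * ((2 * P p.2) * T p.1 p.2) := by
    have hpt : ∀ x y, f x * f y * ker x y
        ≤ ∑' p : ℤ × ℤ, g p.1 x * (g p.2 y * ker x y) := by
      intro x y
      have h1 : f x * f y * ker x y
          ≤ (∑' j : ℤ, g j x) * (∑' k : ℤ, g k y) * ker x y := by
        gcongr
        · exact hcover x
        · exact hcover y
      refine h1.trans_eq ?_
      rw [ENNReal.tsum_prod']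
      rw [mul_assoc]
      rw [← ENNReal.tsum_mul_right]
      congr 1
      ext j
      rw [← ENNReal.tsum_mul_right, ← ENNReal.tsum_mul_left]
    have hmeas2 : ∀ p : ℤ × ℤ,
        Measurable (Function.uncurry fun x y => g p.1 x * (g p.2 y * ker x y)) := by
      intro p
      apply Measurable.mul
      · exact (hgm p.1).comp measurable_fst
      · exact ((hgm p.2).comp measurable_snd).mul measurable_ker
    calc (∫⁻ x, ∫⁻ y, f x * f y * ker x y ∂volume ∂volume)
        ≤ ∫⁻ x, ∫⁻ y, ∑' p : ℤ × ℤ, g p.1 x * (g p.2 y * ker x y) ∂volume ∂volume := by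
          apply lintegral_mono
          intro x
          apply lintegral_mono
          intro y
          exact hpt x y
      _ = ∑' p : ℤ × ℤ, ∫⁻ x, ∫⁻ y, g p.1 x * (g p.2 y * ker x y) ∂volume ∂volume := by
          have hin : ∀ x, (∫⁻ y, ∑' p : ℤ × ℤ, g p.1 x * (g p.2 y * ker x y) ∂volume)
              = ∑' p : ℤ × ℤ, ∫⁻ y, g p.1 x * (g p.2 y * ker x y) ∂volume := by
            intro x
            apply lintegral_tsum
            intro p
            apply Measurable.aemeasurable
            exact measurable_const.mul ((hgm p.2).mul (measurable_ker.of_uncurry_left))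
          simp_rw [hin]
          apply lintegral_tsum
          intro p
          apply Measurable.aemeasurable
          exact Measurable.lintegral_prod_right (hmeas2 p)
      _ = ∑' p : ℤ × ℤ, (2 * P p.1) * ((2 * P p.2) * T p.1 p.2) := by
          congr 1
          ext p
          exact hdouble p.1 p.2
  -- step 2 : individual bound
  have step2 : ∀ p : ℤ × ℤ, (2 * P p.1) * ((2 * P p.2) * T p.1 p.2)
      ≤ 4 * K * (q ^ ((p.1 - p.2).natAbs) * (S ^ ((2:ℝ)/3) * (u p.1 + u p.2))) := by
    rintro ⟨j, k⟩
    simp only []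
    rcases le_total k j with hkj | hjk
    · calc (2 * P j) * ((2 * P k) * T j k)
          ≤ (2 * P j) * ((2 * P k) * (K * a j * (a k) ^ ((2:ℝ)/3))) := by
            gcongr
            exact Tbound1 (A j) (A k)
        _ = 4 * K * (P j * P k * (a j * (a k) ^ ((2:ℝ)/3))) := by ring
        _ = 4 * K * (q ^ ((j - k).natAbs) * (u j * (u k) ^ ((2:ℝ)/3))) := by
            rw [core_alg hkj]
        _ ≤ 4 * K * (q ^ ((j - k).natAbs) * (S ^ ((2:ℝ)/3) * (u j + u k))) := by
            apply mul_le_mul_right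
            apply mul_le_mul_right
            calc u j * (u k) ^ ((2:ℝ)/3) ≤ u j * S ^ ((2:ℝ)/3) :=
                  mul_le_mul_right (ENNReal.rpow_le_rpow (hu_le k) (by norm_num)) _
              _ = S ^ ((2:ℝ)/3) * u j := mul_comm _ _
              _ ≤ S ^ ((2:ℝ)/3) * (u j + u k) := mul_le_mul_right le_self_add _
    · calc (2 * P j) * ((2 * P k) * T j k)
          ≤ (2 * P j) * ((2 * P k) * (K * a k * (a j) ^ ((2:ℝ)/3))) := by
            gcongr
            exact Tbound2 (A j) (A k)
        _ = 4 * K * (P k * P j * (a k * (a j) ^ ((2:ℝ)/3))) := by ring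
        _ = 4 * K * (q ^ ((k - j).natAbs) * (u k * (u j) ^ ((2:ℝ)/3))) := by
            rw [core_alg hjk]
        _ = 4 * K * (q ^ ((j - k).natAbs) * (u k * (u j) ^ ((2:ℝ)/3))) := by
            rw [show (k - j).natAbs = (j - k).natAbs by omega]
        _ ≤ 4 * K * (q ^ ((j - k).natAbs) * (S ^ ((2:ℝ)/3) * (u j + u k))) := by
            apply mul_le_mul_right
            apply mul_le_mul_right
            calc u k * (u j) ^ ((2:ℝ)/3) ≤ u k * S ^ ((2:ℝ)/3) :=
                  mul_le_mul_right (ENNReal.rpow_le_rpow (hu_le j) (by norm_num)) _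
              _ = S ^ ((2:ℝ)/3) * u k := mul_comm _ _
              _ ≤ S ^ ((2:ℝ)/3) * (u j + u k) := mul_le_mul_right le_add_self _
  -- step 3 : sum the bound
  have step3 : ∑' p : ℤ × ℤ, (q ^ ((p.1 - p.2).natAbs) * (S ^ ((2:ℝ)/3) * (u p.1 + u p.2)))
      ≤ S ^ ((2:ℝ)/3) * (2 * c6 * S) := by
    have hsplit : ∀ p : ℤ × ℤ, q ^ ((p.1 - p.2).natAbs) * (S ^ ((2:ℝ)/3) * (u p.1 + u p.2))
        = S ^ ((2:ℝ)/3) * (q ^ ((p.1 - p.2).natAbs) * u p.1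
            + q ^ ((p.1 - p.2).natAbs) * u p.2) := by
      intro p
      ring
    simp_rw [hsplit]
    rw [ENNReal.tsum_mul_left]
    gcongr
    rw [ENNReal.tsum_add]
    have hsum1 : ∑' p : ℤ × ℤ, q ^ ((p.1 - p.2).natAbs) * u p.1 ≤ c6 * S := by
      rw [ENNReal.tsum_prod']
      calc ∑' j, ∑' k, q ^ ((j - k).natAbs) * u j
          = ∑' j : ℤ, c6 * u j := by
            congr 1
            ext j
            rw [ENNReal.tsum_mul_right, tsum_q_shift j]
        _ = c6 * ∑' j, u j := ENNReal.tsum_mul_left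
        _ ≤ c6 * S := mul_le_mul_right hu_sum _
    have hsum2 : ∑' p : ℤ × ℤ, q ^ ((p.1 - p.2).natAbs) * u p.2 ≤ c6 * S := by
      rw [ENNReal.tsum_prod']
      rw [ENNReal.tsum_comm]
      calc ∑' k, ∑' j, q ^ ((j - k).natAbs) * u k
          = ∑' k : ℤ, c6 * u k := by
            congr 1
            ext k
            rw [ENNReal.tsum_mul_right]
            congr 1
            calc ∑' j : ℤ, q ^ ((j - k).natAbs)
                = ∑' m : ℤ, q ^ (m.natAbs) := by
                  refine ((Equiv.addRight k).tsum_eq (fun j => q ^ ((j - k).natAbs))).symm.trans ?_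
                  congr 1
                  ext m
                  simp
              _ = c6 := rfl
        _ = c6 * ∑' k, u k := ENNReal.tsum_mul_left
        _ ≤ c6 * S := mul_le_mul_right hu_sum _
    calc (∑' p : ℤ × ℤ, q ^ ((p.1 - p.2).natAbs) * u p.1)
          + ∑' p : ℤ × ℤ, q ^ ((p.1 - p.2).natAbs) * u p.2
        ≤ c6 * S + c6 * S := add_le_add hsum1 hsum2
      _ = 2 * c6 * S := by ring
  -- put it together
  calc (∫⁻ x, ∫⁻ y, f x * f y * ker x y ∂volume ∂volume)
      ≤ ∑' p : ℤ × ℤ, (2 * P p.1) * ((2 * P p.2) * T p.1 p.2) := step1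
    _ ≤ ∑' p : ℤ × ℤ, 4 * K *
          (q ^ ((p.1 - p.2).natAbs) * (S ^ ((2:ℝ)/3) * (u p.1 + u p.2))) :=
        ENNReal.tsum_le_tsum step2
    _ = 4 * K * ∑' p : ℤ × ℤ,
          (q ^ ((p.1 - p.2).natAbs) * (S ^ ((2:ℝ)/3) * (u p.1 + u p.2))) :=
        ENNReal.tsum_mul_left
    _ ≤ 4 * K * (S ^ ((2:ℝ)/3) * (2 * c6 * S)) := by gcongr
    _ ≤ 4 * K * (S ^ ((2:ℝ)/3) * (2 * (2 * (1 - q)⁻¹) * S)) := by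
        gcongr
        exact c6_le
    _ = 16 * K * (1 - q)⁻¹ * (S ^ ((2:ℝ)/3) * S) := by ring
    _ = C0 * S ^ ((5:ℝ)/3) := by
        rw [C0]
        congr 1
        nth_rewrite 2 [← ENNReal.rpow_one S]
        rw [← ENNReal.rpow_add _ _ hS0 hStop]
        norm_num

end HLS3
end MainL

noncomputable section Glue
namespace HLS3
open scoped NNReal

lemma nnnorm_div_le (A c : ℝ) (hc : 0 ≤ c) :
    (‖A / c‖₊ : ℝ≥0∞) ≤ (‖A‖₊ : ℝ≥0∞) * (ENNReal.ofReal c)⁻¹ := by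
  rcases eq_or_lt_of_le hc with h0 | hpos
  · simp [← h0]
  · have hcne : (‖c‖₊ : ℝ≥0) ≠ 0 := by
      simp [nnnorm_eq_zero]
      exact hpos.ne'
    rw [nnnorm_div, ENNReal.coe_div hcne]
    rw [show (‖c‖₊ : ℝ≥0∞) = ENNReal.ofReal c from (Real.enorm_eq_ofReal hc).symm ▸ rfl]
    rw [div_eq_mul_inv]

theorem coulD_le_HLS_aux :
    ∃ C > (0 : ℝ), ∀ ρ : E3 → ℝ, MemLp ρ (6 / 5) volume →
      coulD ρ ≤ C * (eLpNorm ρ (6 / 5) volume).toReal ^ 2 := by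
  refine ⟨(1/2) * C0.toReal,
    mul_pos (by norm_num) (ENNReal.toReal_pos C0_ne_zero C0_ne_top), ?_⟩
  intro ρ hρ
  set C : ℝ := (1/2) * C0.toReal with hC
  have hCnonneg : 0 ≤ C := by
    rw [hC]
    positivity
  have hm := hρ.1
  set g : E3 → ℝ := hm.mk ρ with hgdef
  have hgm : Measurable g := hm.stronglyMeasurable_mk.measurable
  have hae : ρ =ᵐ[volume] g := hm.ae_eq_mk
  set f : E3 → ℝ≥0∞ := fun x => (‖g x‖₊ : ℝ≥0∞) with hfdef
  have hfm : Measurable f := hgm.nnnorm.coe_nnreal_ennreal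
  have hffin : ∀ x, f x ≠ ∞ := fun x => ENNReal.coe_ne_top
  have hNeq : eLpNorm ρ (6/5) volume = eLpNorm g (6/5) volume := eLpNorm_congr_ae hae
  have hNfin : eLpNorm g (6/5) volume ≠ ∞ := by
    rw [← hNeq]
    exact hρ.2.ne
  -- identification of the norm
  have hS_eq : (∫⁻ x, f x ^ ((6:ℝ)/5) ∂volume) ^ ((5:ℝ)/3)
      = (eLpNorm g (6/5) volume) ^ 2 := by
    rw [eLpNorm_eq_lintegral_rpow_enorm_toReal (by norm_num)
      (by exact (ENNReal.div_lt_top (by norm_num) (by norm_num)).ne)]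
    have htr : ((6:ℝ≥0∞)/5).toReal = (6:ℝ)/5 := by
      rw [ENNReal.toReal_div]
      norm_num
    rw [htr]
    rw [← ENNReal.rpow_natCast (((∫⁻ x, ‖g x‖ₑ ^ ((6:ℝ)/5) ∂volume)) ^ ((1:ℝ)/((6:ℝ)/5))) 2]
    rw [← ENNReal.rpow_mul]
    congr 1
    norm_num
  -- the bound on the lintegral side
  have hmain : ∫⁻ x, ∫⁻ y, f x * f y * ker x y ∂volume ∂volume
      ≤ C0 * (eLpNorm g (6/5) volume) ^ 2 := by
    rw [← hS_eq]
    exact lintegral_HLS hfm hffin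
  have hRfin : C0 * (eLpNorm g (6/5) volume) ^ 2 ≠ ∞ :=
    ENNReal.mul_ne_top C0_ne_top (by
      exact pow_ne_top hNfin)
  -- the integrand functions
  set G : E3 → ℝ := fun x => ∫ y, g x * g y / ‖x - y‖ with hG
  have hFG : (∫ x, ∫ y, ρ x * ρ y / ‖x - y‖) = ∫ x, G x := by
    apply integral_congr_ae
    filter_upwards [hae] with x hx
    apply integral_congr_ae
    filter_upwards [hae] with y hy
    rw [hx, hy]
  have hcoul : coulD ρ = (1/2) * ∫ x, G x := by
    rw [coulD, hFG]
  -- pointwise domination of the inner integral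
  have hGx : ∀ x, (‖G x‖₊ : ℝ≥0∞) ≤ ∫⁻ y, f x * f y * ker x y ∂volume := by
    intro x
    refine (enorm_integral_le_lintegral_enorm _).trans ?_
    apply lintegral_mono
    intro y
    calc (‖g x * g y / ‖x - y‖‖₊ : ℝ≥0∞)
        ≤ (‖g x * g y‖₊ : ℝ≥0∞) * (ENNReal.ofReal ‖x - y‖)⁻¹ :=
          nnnorm_div_le _ _ (norm_nonneg _)
      _ = f x * f y * ker x y := by
          rw [nnnorm_mul, ENNReal.coe_mul, ker]
  by_cases hint : Integrable G volume
  · -- main case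
    have h1 : coulD ρ ≤ (1/2) * (∫⁻ x, (‖G x‖₊ : ℝ≥0∞) ∂volume).toReal := by
      rw [hcoul]
      apply mul_le_mul_of_nonneg_left _ (by norm_num)
      have hnn : (∫⁻ x, ENNReal.ofReal ‖G x‖ ∂volume) = ∫⁻ x, (‖G x‖₊ : ℝ≥0∞) ∂volume := by
        congr 1
        ext x
        rw [ofReal_norm_eq_enorm, enorm_eq_nnnorm]
      calc (∫ x, G x) ≤ ‖∫ x, G x‖ := le_abs_self _
        _ ≤ (∫⁻ x, ENNReal.ofReal ‖G x‖ ∂volume).toReal := norm_integral_le_lintegral_norm _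
        _ = (∫⁻ x, (‖G x‖₊ : ℝ≥0∞) ∂volume).toReal := by rw [hnn]
    have h2 : (∫⁻ x, (‖G x‖₊ : ℝ≥0∞) ∂volume) ≤ C0 * (eLpNorm g (6/5) volume) ^ 2 := by
      refine le_trans ?_ hmain
      apply lintegral_mono
      intro x
      exact hGx x
    calc coulD ρ ≤ (1/2) * (∫⁻ x, (‖G x‖₊ : ℝ≥0∞) ∂volume).toReal := h1
      _ ≤ (1/2) * (C0 * (eLpNorm g (6/5) volume) ^ 2).toReal := by
          apply mul_le_mul_of_nonneg_left _ (by norm_num)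
          exact ENNReal.toReal_mono hRfin h2
      _ = C * (eLpNorm ρ (6/5) volume).toReal ^ 2 := by
          rw [hC, ENNReal.toReal_mul, hNeq, ENNReal.toReal_pow]
          ring
  · -- degenerate case : the outer integral is zero
    have : (∫ x, G x) = 0 := integral_undef hint
    rw [hcoul, this, mul_zero]
    positivity

end HLS3
end Glue

/-- Hardy–Littlewood–Sobolev bound on the Coulomb energy:
`D(ρ) ≤ C ‖ρ‖_{L^{6/5}}²` with a universal constant `C`. -/
theorem coulD_le_HLS :
    ∃ C > (0 : ℝ), ∀ ρ : E3 → ℝ, MemLp ρ (6 / 5) volume →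
      coulD ρ ≤ C * (eLpNorm ρ (6 / 5) volume).toReal ^ 2 :=
  HLS3.coulD_le_HLS_aux
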